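/- Let Q be a symmetric n×n integer matrix whose kernel (over the rationals) has dimension k. Then Q is congruent over the integers (i.e., there exists P in GL(n,ℤ) with PᵀQP of the stated form) to a block matrix with an (n−k)×(n−k) symmetric integer matrix A in the upper-left block, zeros elsewhere, where A is invertible over ℚ. -/

import Mathlib

open Matrix

open Matrix

namespace SymmIntAux

variable {n : ℕ}

def castv {n : ℕ} (x : Fin n → ℤ) : Fin n → ℚ := fun i => (x i : ℚ)

lemma castv_inj : Function.Injective (castv (n := n)) := by
  intro x y h
  funext i
  have := congrFun h i
  simpa [castv] using this

lemma castv_mulVec (Q : Matrix (Fin n) (Fin n) ℤ) (x : Fin n → ℤ) :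
    (Q.map (Int.cast : ℤ → ℚ)).mulVec (castv x) = castv (Q.mulVec x) := by
  funext i
  simp only [castv, mulVec, dotProduct, map_apply]
  push_cast
  rfl

lemma pair_cast (Q : Matrix (Fin n) (Fin n) ℤ) (u t : Fin n → ℤ) :
    castv u ⬝ᵥ (Q.map (Int.cast : ℤ → ℚ)).mulVec (castv t)
      = ((u ⬝ᵥ Q.mulVec t : ℤ) : ℚ) := by
  rw [castv_mulVec]
  simp only [castv, dotProduct]
  push_cast
  rfl

lemma castv_smul (z : ℤ) (x : Fin n → ℤ) : castv (z • x) = (z : ℚ) • castv x := by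
  funext i; simp [castv]

lemma castv_sum {ι : Type*} (s : Finset ι) (g : ι → (Fin n → ℤ)) :
    castv (∑ i ∈ s, g i) = ∑ i ∈ s, castv (g i) := by
  funext j
  simp [castv]

lemma symm_pair {R : Type*} [CommRing R] {S : Matrix (Fin n) (Fin n) R} (hS : S.IsSymm)
    (u v : Fin n → R) : u ⬝ᵥ S.mulVec v = v ⬝ᵥ S.mulVec u := by
  rw [dotProduct_mulVec, ← mulVec_transpose, hS.eq, dotProduct_comm]

end SymmIntAux

namespace SymmIntAux

lemma exists_equiv {n k : ℕ} (f : Fin k ↪ Fin n) :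
    ∃ e : Fin (n - k) ⊕ Fin k ≃ Fin n, ∀ i, e (Sum.inr i) = f i := by
  classical
  have hcard : Fintype.card ((Set.range ⇑f)ᶜ : Set (Fin n)) = n - k := by
    rw [Fintype.card_compl_set, Set.card_range_of_injective f.injective]
    simp
  let eC : Fin (n - k) ≃ ((Set.range ⇑f)ᶜ : Set (Fin n)) :=
    Fintype.equivOfCardEq (by simp [hcard])
  let eF : Fin k ≃ (Set.range ⇑f : Set (Fin n)) := Equiv.ofInjective _ f.injective
  refine ⟨(Equiv.sumComm _ _).trans ((Equiv.sumCongr eF eC).trans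
    (Equiv.Set.sumCompl (Set.range ⇑f))), fun i => ?_⟩
  simp [eF, Equiv.ofInjective]

end SymmIntAux

set_option maxHeartbeats 1000000 in
open SymmIntAux in
/-- a symmetric `n × n` integer matrix whose rational kernel has
dimension `k` is congruent over `ℤ` to a block matrix `diag(A, 0ₖ)` where `A`
is a symmetric `(n-k) × (n-k)` integer matrix invertible over `ℚ`. -/
theorem symm_int_matrix_congruent_to_block_diag (n k : ℕ)
    (Q : Matrix (Fin n) (Fin n) ℤ) (hQ : Q.IsSymm)
    (hk : Module.finrank ℚ
      (LinearMap.ker (Matrix.mulVecLin (Q.map (Int.cast : ℤ → ℚ)))) = k) :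
    ∃ P : Matrix (Fin n) (Fin n) ℤ, IsUnit P.det ∧
      ∃ A : Matrix (Fin (n - k)) (Fin (n - k)) ℤ, A.IsSymm ∧
        (A.map (Int.cast : ℤ → ℚ)).det ≠ 0 ∧
        ∀ h : n - k + k = n,
          Pᵀ * Q * P =
            (Matrix.fromBlocks A 0 0 (0 : Matrix (Fin k) (Fin k) ℤ)).submatrix
              ((finCongr h).symm.trans finSumFinEquiv.symm)
              ((finCongr h).symm.trans finSumFinEquiv.symm) := by
  classical
  set M : Matrix (Fin n) (Fin n) ℚ := Q.map (Int.cast : ℤ → ℚ) with hMdef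
  have hMsymm : M.IsSymm := hQ.map _
  set Kz : Submodule ℤ (Fin n → ℤ) := LinearMap.ker Q.mulVecLin with hKzdef
  set Kq : Submodule ℚ (Fin n → ℚ) := LinearMap.ker M.mulVecLin with hKqdef
  have memKz : ∀ x : Fin n → ℤ, x ∈ Kz ↔ Q.mulVec x = 0 := by
    intro x; rw [hKzdef, LinearMap.mem_ker, mulVecLin_apply]
  have memKq : ∀ v : Fin n → ℚ, v ∈ Kq ↔ M.mulVec v = 0 := by
    intro v; rw [hKqdef, LinearMap.mem_ker, mulVecLin_apply]
  obtain ⟨m, bM, bN, f, a, hsnf⟩ := Kz.smithNormalForm (Pi.basisFun ℤ (Fin n))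
  -- the images `bM (f i)` lie in the kernel (saturation)
  have hbMf : ∀ i, Q.mulVec (bM (f i)) = 0 := by
    intro i
    have ha : a i ≠ 0 := by
      intro h0
      apply bN.ne_zero i
      have := hsnf i
      rw [h0, zero_smul] at this
      exact Subtype.ext this
    have hmem : (bN i : Fin n → ℤ) ∈ Kz := (bN i).2
    rw [memKz, hsnf i] at hmem
    have : a i • Q.mulVec (bM (f i)) = 0 := by
      rw [← hmem, mulVec_smul]
    rcases smul_eq_zero.mp this with h | h
    · exact absurd h ha
    · exact h
  -- the ℚ-vectors `b' j := castv (bM j)` are linearly independent over ℚ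
  set b' : Fin n → (Fin n → ℚ) := fun j => castv (bM j) with hb'def
  have hb'LI : LinearIndependent ℚ b' := by
    have hdetZ : IsUnit ((Pi.basisFun ℤ (Fin n)).toMatrix bM).det :=
      IsUnit.of_mul_eq_one (bM.toMatrix (Pi.basisFun ℤ (Fin n))).det (by
        rw [← det_mul, Module.Basis.toMatrix_mul_toMatrix_flip, det_one])
    have hB : IsUnit (((Pi.basisFun ℤ (Fin n)).toMatrix bM).map (Int.cast : ℤ → ℚ)) := by
      rw [Matrix.isUnit_iff_isUnit_det]
      have hrw : (((Pi.basisFun ℤ (Fin n)).toMatrix ⇑bM).map (Int.cast : ℤ → ℚ))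
          = (Int.castRingHom ℚ).mapMatrix ((Pi.basisFun ℤ (Fin n)).toMatrix ⇑bM) := rfl
      rw [hrw, ← RingHom.map_det]
      exact hdetZ.map _
    have hLI := Matrix.linearIndependent_cols_iff_isUnit.mpr hB
    have hcols : (fun j => ((((Pi.basisFun ℤ (Fin n)).toMatrix bM).map
        (Int.cast : ℤ → ℚ))ᵀ) j) = b' := by
      funext j
      funext i
      simp [Module.Basis.toMatrix_apply, Pi.basisFun_repr, hb'def, castv]
    exact hcols ▸ (hLI : LinearIndependent ℚ (fun j => ((((Pi.basisFun ℤ (Fin n)).toMatrix bM).map (Int.cast : ℤ → ℚ))ᵀ) j))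
  -- each b' (f i) is in the rational kernel
  have hb'fKq : ∀ i, b' (f i) ∈ Kq := by
    intro i
    rw [memKq, hb'def]
    simp only
    rw [castv_mulVec, hbMf i]
    funext j; simp [castv]
  -- the rational kernel is the span of the b' (f i)
  have castv_zero : castv (0 : Fin n → ℤ) = 0 := by funext i; simp [castv]
  have hKqSpan : Kq = Submodule.span ℚ (Set.range (b' ∘ ⇑f)) := by
    apply le_antisymm
    · intro v hv
      obtain ⟨d, hd⟩ := IsLocalization.exist_integer_multiples (nonZeroDivisors ℤ)
        (S := ℚ) (Finset.univ : Finset (Fin n)) v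
      choose x hx using fun i => hd i (Finset.mem_univ i)
      have hdne : ((d : ℤ) : ℚ) ≠ 0 := by
        exact_mod_cast nonZeroDivisors.coe_ne_zero d
      have hcx : castv x = ((d : ℤ) : ℚ) • v := by
        funext i
        have h1 := hx i
        rw [← Int.cast_smul_eq_zsmul ℚ] at h1
        simpa [castv] using h1
      have hxK : x ∈ Kz := by
        rw [memKz]
        apply castv_inj
        rw [← castv_mulVec, hcx, mulVec_smul, (memKq v).mp hv, smul_zero, castv_zero]
      set y : Kz := ⟨x, hxK⟩ with hydef
      have hrepr : x = ∑ i, bN.repr y i • ((bN i : Fin n → ℤ)) := by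
        have h : ((∑ i, bN.repr y i • bN i : Kz) : Fin n → ℤ) = (y : Kz) := by
          exact congrArg _ (bN.sum_repr y)
        rw [AddSubmonoidClass.coe_finset_sum] at h
        simp only [SetLike.val_smul] at h
        exact h.symm
      have hxspan : castv x ∈ Submodule.span ℚ (Set.range (b' ∘ ⇑f)) := by
        rw [hrepr, castv_sum]
        apply Submodule.sum_mem
        intro i _
        rw [hsnf i, smul_smul, castv_smul]
        exact Submodule.smul_mem _ _ (Submodule.subset_span ⟨i, rfl⟩)
      have hveq : v = (((d : ℤ) : ℚ))⁻¹ • castv x := by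
        rw [hcx, inv_smul_smul₀ hdne]
      rw [hveq]
      exact Submodule.smul_mem _ _ hxspan
    · rw [Submodule.span_le]
      rintro _ ⟨i, rfl⟩
      exact hb'fKq i
  -- hence m = k
  have hmk : k = m := by
    have h1 : Module.finrank ℚ Kq = m := by
      rw [hKqSpan, finrank_span_eq_card (hb'LI.comp ⇑f f.injective)]
      simp
    rw [← hk, h1]
  subst hmk
  -- the reordering equivalence
  obtain ⟨e, he⟩ := exists_equiv f
  have hkn : k ≤ n := by
    simpa using Fintype.card_le_of_embedding f
  have h0 : n - k + k = n := Nat.sub_add_cancel hkn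
  set φ0 : Fin n ≃ (Fin (n - k) ⊕ Fin k) :=
    (finCongr h0).symm.trans finSumFinEquiv.symm with hφ0def
  set cc : Module.Basis (Fin n) ℤ (Fin n → ℤ) := bM.reindex (φ0.trans e).symm with hccdef
  have hcc : ∀ j, cc j = bM (e (φ0 j)) := by
    intro j; rw [hccdef, Module.Basis.reindex_apply]; simp
  set b0 : Module.Basis (Fin n) ℤ (Fin n → ℤ) := Pi.basisFun ℤ (Fin n) with hb0def
  set P : Matrix (Fin n) (Fin n) ℤ := b0.toMatrix cc with hPdef
  have hPentry : ∀ i j, P i j = bM (e (φ0 j)) i := by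
    intro i j
    rw [hPdef, Module.Basis.toMatrix_apply, hb0def, Pi.basisFun_repr, hcc]
  have hPdet : IsUnit P.det := by
    refine IsUnit.of_mul_eq_one (a := P.det) (cc.toMatrix b0).det ?_
    rw [← det_mul, Module.Basis.toMatrix_mul_toMatrix_flip, det_one]
  set A : Matrix (Fin (n - k)) (Fin (n - k)) ℤ :=
    Matrix.of (fun i j => bM (e (Sum.inl i)) ⬝ᵥ Q.mulVec (bM (e (Sum.inl j)))) with hAdef
  have hAsymm : A.IsSymm := by
    apply Matrix.IsSymm.ext
    intro i j
    exact symm_pair hQ _ _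
  have hPQP : ∀ i j, (Pᵀ * Q * P) i j = bM (e (φ0 i)) ⬝ᵥ Q.mulVec (bM (e (φ0 j))) := by
    intro i j
    simp only [Matrix.mul_apply, transpose_apply, dotProduct, mulVec, hPentry,
      Finset.mul_sum, Finset.sum_mul]
    rw [Finset.sum_comm]
    refine Finset.sum_congr rfl fun z _ => Finset.sum_congr rfl fun y _ => by ring
  have hdetA : ((A.map (Int.cast : ℤ → ℚ)).det ≠ 0) := by
    set A' : Matrix (Fin (n - k)) (Fin (n - k)) ℚ := A.map (Int.cast : ℤ → ℚ) with hA'def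
    intro hdet0
    obtain ⟨v, hvne, hv0⟩ := Matrix.exists_mulVec_eq_zero_iff.mpr hdet0
    obtain ⟨i1, hi1⟩ := Function.ne_iff.mp hvne
    have hnpos : 0 < n := lt_of_lt_of_le i1.pos (Nat.sub_le n k)
    haveI : Nonempty (Fin n) := ⟨⟨0, hnpos⟩⟩
    have hcard : Fintype.card (Fin n) = Module.finrank ℚ (Fin n → ℚ) := by simp
    set b'' : Module.Basis (Fin n) ℚ (Fin n → ℚ) :=
      basisOfLinearIndependentOfCardEqFinrank hb'LI hcard with hb''def
    have hco : b' = ⇑b'' := by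
      funext j
      rw [hb''def, coe_basisOfLinearIndependentOfCardEqFinrank]
    set w : Fin n → ℚ := ∑ i, v i • b' (e (Sum.inl i)) with hwdef
    have hA'entry : ∀ i j, A' i j = b' (e (Sum.inl i)) ⬝ᵥ M.mulVec (b' (e (Sum.inl j))) := by
      intro i j
      rw [hA'def]
      show ((A i j : ℤ) : ℚ) = _
      rw [hb'def, hMdef]
      exact (pair_cast Q _ _).symm
    have hMw_sum : M *ᵥ w = ∑ i, v i • (M *ᵥ b' (e (Sum.inl i))) := by
      show M.mulVecLin w = _
      rw [hwdef, map_sum]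
      simp only [_root_.map_smul, Matrix.mulVecLin_apply]
    have hpairw : ∀ u : Fin n → ℚ,
        u ⬝ᵥ (M *ᵥ w) = ∑ i, v i * (u ⬝ᵥ (M *ᵥ b' (e (Sum.inl i)))) := by
      intro u
      rw [hMw_sum]
      simp only [dotProduct, Finset.sum_apply, Pi.smul_apply, smul_eq_mul, Finset.mul_sum]
      rw [Finset.sum_comm]
      refine Finset.sum_congr rfl fun i _ => Finset.sum_congr rfl fun j _ => by ring
    have hzero : ∀ j, b'' j ⬝ᵥ (M *ᵥ w) = 0 := by
      intro j
      rw [← hco]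
      obtain ⟨s, rfl⟩ := e.surjective j
      cases s with
      | inr i0 =>
        have h1 : M *ᵥ b' (e (Sum.inr i0)) = 0 := by
          rw [he i0]
          exact (memKq _).mp (hb'fKq i0)
        rw [symm_pair hMsymm, h1, dotProduct_zero]
      | inl i' =>
        rw [hpairw]
        have hsum : ∑ i, v i * (b' (e (Sum.inl i')) ⬝ᵥ (M *ᵥ b' (e (Sum.inl i))))
            = (A' *ᵥ v) i' := by
          refine (Finset.sum_congr rfl fun i _ => ?_).trans rfl
          rw [← hA'entry]
          ring
        rw [hsum, hv0]
        rfl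
    have hMw0 : M *ᵥ w = 0 := by
      let L : (Fin n → ℚ) →ₗ[ℚ] ℚ :=
        { toFun := fun u => u ⬝ᵥ (M *ᵥ w)
          map_add' := fun u₁ u₂ => add_dotProduct _ _ _
          map_smul' := fun c u => by simpa using smul_dotProduct c u (M *ᵥ w) }
      have hL : L = 0 := b''.ext fun j => hzero j
      funext i
      have h1 : L (Pi.single i 1) = 0 := by rw [hL]; rfl
      have h2 : L (Pi.single i 1) = (M *ᵥ w) i := by
        show Pi.single i 1 ⬝ᵥ (M *ᵥ w) = _
        rw [single_dotProduct, one_mul]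
      rw [← h2, h1]
      rfl
    have hwKq : w ∈ Kq := (memKq w).mpr hMw0
    rw [hKqSpan] at hwKq
    have hrange : Set.range (b' ∘ ⇑f) = ⇑b'' '' Set.range ⇑f := by
      rw [Set.range_comp, hco]
    rw [hrange] at hwKq
    have hsupp := (Module.Basis.mem_span_image b'').mp hwKq
    have hreprw : ∀ i1, b''.repr w (e (Sum.inl i1)) = v i1 := by
      intro i1
      rw [hwdef]
      simp only [hco, map_sum, _root_.map_smul, Module.Basis.repr_self, Finsupp.coe_finset_sum,
        Finset.sum_apply, Finsupp.coe_smul, Pi.smul_apply, Finsupp.single_apply,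
        e.injective.eq_iff, Sum.inl.injEq, smul_eq_mul, mul_ite, mul_one, mul_zero]
      rw [Finset.sum_ite_eq' Finset.univ i1 v, if_pos (Finset.mem_univ i1)]
    have hmem : e (Sum.inl i1) ∈ (b''.repr w).support := by
      rw [Finsupp.mem_support_iff, hreprw]
      exact hi1
    obtain ⟨i0, hi0⟩ := hsupp hmem
    rw [← he i0] at hi0
    exact absurd (e.injective hi0) (by simp)
  refine ⟨P, hPdet, A, hAsymm, hdetA, ?_⟩
  intro h
  have hh : h = h0 := rfl
  subst hh
  ext i j
  rw [hPQP, Matrix.submatrix_apply]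
  show bM (e (φ0 i)) ⬝ᵥ Q.mulVec (bM (e (φ0 j)))
    = (Matrix.fromBlocks A 0 0 (0 : Matrix (Fin k) (Fin k) ℤ)) (φ0 i) (φ0 j)
  rcases hsi : φ0 i with i' | i' <;> rcases hsj : φ0 j with j' | j'
  · rfl
  · rw [he j', hbMf j']
    simp
  · rw [symm_pair hQ, he i', hbMf i']
    simp
  · rw [he j', hbMf j']
    simp
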